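/- Let d be a fixed positive integer. Then there exists an integer N such that for all n ≥ N, α_{n+1}^d > α_n^d; that is, the sequence {α_n^d} in n is eventually strictly increasing. -/

import Mathlib

open Finset


/-- A tuple `v : Fin d → ZMod n` is zero-sum-free if no non-empty subset of its
components sums to zero in `ZMod n`. -/
def ZeroSumFree {n d : ℕ} (v : Fin d → ZMod n) : Prop :=
  ∀ S : Finset (Fin d), S.Nonempty → ∑ i ∈ S, v i ≠ 0

/-- `alphaZSF n d` is the number of zero-sum-free `d`-tuples in `(ZMod n)^d`. -/
noncomputable def alphaZSF (n d : ℕ) : ℕ :=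
  Nat.card {v : Fin d → ZMod n // ZeroSumFree v}

/-- A tuple is irreducible if `gcd(v₁, ..., v_d, n) = 1`, where components are
identified with their representatives in `{0, 1, ..., n-1}`. -/
def IrreducibleTuple {n d : ℕ} (v : Fin d → ZMod n) : Prop :=
  Nat.gcd (Finset.univ.gcd fun i => (v i).val) n = 1

/-- `betaZSF n d` is the number of irreducible zero-sum-free `d`-tuples in `(ZMod n)^d`. -/
noncomputable def betaZSF (n d : ℕ) : ℕ :=
  Nat.card {v : Fin d → ZMod n // ZeroSumFree v ∧ IrreducibleTuple v}

section Counting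

variable {n d : ℕ} [NeZero n]

/-- the "hyperplane" of tuples whose `S`-sum is zero -/
def sumZero (n d : ℕ) [NeZero n] (S : Finset (Fin d)) : Finset (Fin d → ZMod n) :=
  univ.filter (fun v => ∑ i ∈ S, v i = 0)

lemma card_sumZero_mul (S : Finset (Fin d)) (hS : S.Nonempty) :
    (sumZero n d S).card * n = n ^ d := by
  obtain ⟨i₀, hi₀⟩ := hS
  have e : {v : Fin d → ZMod n // ∑ i ∈ S, v i = 0} × ZMod n ≃ (Fin d → ZMod n) :=
    { toFun := fun p => Function.update p.1.1 i₀ (p.1.1 i₀ + p.2)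
      invFun := fun w =>
        (⟨Function.update w i₀ (w i₀ - ∑ i ∈ S, w i), by
            rw [Finset.sum_update_of_mem hi₀]
            have := Finset.add_sum_erase S w hi₀
            rw [show S \ {i₀} = S.erase i₀ from (Finset.erase_eq S i₀).symm]
            linear_combination this⟩, ∑ i ∈ S, w i)
      left_inv := by
        rintro ⟨⟨v, hv⟩, c⟩
        have hsum : ∑ i ∈ S, Function.update v i₀ (v i₀ + c) i = c := by
          rw [Finset.sum_update_of_mem hi₀,
            show S \ {i₀} = S.erase i₀ from (Finset.erase_eq S i₀).symm]
          have := Finset.add_sum_erase S v hi₀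
          linear_combination this + hv
        ext i
        · simp only [hsum, Function.update_self, Function.update_idem]
          rw [show v i₀ + c - c = v i₀ by ring, Function.update_eq_self]
        · simp [hsum]
      right_inv := by
        intro w
        simp only [Function.update_self, Function.update_idem]
        rw [show w i₀ - ∑ i ∈ S, w i + ∑ i ∈ S, w i = w i₀ by ring,
          Function.update_eq_self] }
  have hc := Fintype.card_congr e
  rw [Fintype.card_prod, Fintype.card_fun, ZMod.card, Fintype.card_fin] at hc
  rw [← hc]
  congr 1
  rw [sumZero]
  exact (Fintype.card_subtype _).symm

lemma card_sumZero (S : Finset (Fin d)) (hS : S.Nonempty) (hd : 0 < d) :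
    (sumZero n d S).card = n ^ (d - 1) := by
  have h := card_sumZero_mul (n := n) S hS
  have hn : 0 < n := Nat.pos_of_ne_zero (NeZero.ne n)
  have : n ^ d = n ^ (d - 1) * n := by
    rw [← pow_succ]
    congr 1
    omega
  rw [this] at h
  exact Nat.eq_of_mul_eq_mul_right hn h

lemma card_pair_le (S T : Finset (Fin d)) (i j : Fin d)
    (hiS : i ∈ S) (hiT : i ∉ T) (hjT : j ∈ T) :
    (sumZero n d S ∩ sumZero n d T).card ≤ n ^ (d - 2) := by
  classical
  have hij : i ≠ j := fun h => hiT (h ▸ hjT)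
  have hcard : Fintype.card {k : Fin d // k ≠ i ∧ k ≠ j} = d - 2 := by
    rw [Fintype.card_subtype]
    have : (univ.filter (fun k : Fin d => k ≠ i ∧ k ≠ j)) = ({i, j} : Finset (Fin d))ᶜ := by
      ext k; simp [not_or]
    rw [this, Finset.card_compl, Finset.card_insert_of_notMem (by simpa using hij),
      Finset.card_singleton, Fintype.card_fin]
  have key : ∀ v w, v ∈ sumZero n d S ∩ sumZero n d T → w ∈ sumZero n d S ∩ sumZero n d T →
      (∀ k : Fin d, k ≠ i → k ≠ j → v k = w k) → v = w := by
    intro v w hv hw hagree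
    simp only [sumZero, Finset.mem_inter, Finset.mem_filter] at hv hw
    have hvS := hv.1.2; have hvT := hv.2.2; have hwS := hw.1.2; have hwT := hw.2.2
    have hj : v j = w j := by
      have h1 : v j + ∑ k ∈ T.erase j, v k = 0 := by
        rw [Finset.add_sum_erase T v hjT]; exact hvT
      have h2 : w j + ∑ k ∈ T.erase j, w k = 0 := by
        rw [Finset.add_sum_erase T w hjT]; exact hwT
      have he : ∑ k ∈ T.erase j, v k = ∑ k ∈ T.erase j, w k := by
        apply Finset.sum_congr rfl
        intro k hk
        exact hagree k (fun h => hiT (h ▸ Finset.mem_of_mem_erase hk))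
          (Finset.ne_of_mem_erase hk)
      linear_combination h1 - h2 - he
    have hi : v i = w i := by
      have h1 : v i + ∑ k ∈ S.erase i, v k = 0 := by
        rw [Finset.add_sum_erase S v hiS]; exact hvS
      have h2 : w i + ∑ k ∈ S.erase i, w k = 0 := by
        rw [Finset.add_sum_erase S w hiS]; exact hwS
      have he : ∑ k ∈ S.erase i, v k = ∑ k ∈ S.erase i, w k := by
        apply Finset.sum_congr rfl
        intro k hk
        by_cases hkj : k = j
        · subst hkj; exact hj
        · exact hagree k (Finset.ne_of_mem_erase hk) hkj
      linear_combination h1 - h2 - he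
    funext k
    by_cases hki : k = i
    · subst hki; exact hi
    by_cases hkj : k = j
    · subst hkj; exact hj
    · exact hagree k hki hkj
  calc (sumZero n d S ∩ sumZero n d T).card
      ≤ (univ : Finset ({k : Fin d // k ≠ i ∧ k ≠ j} → ZMod n)).card := by
        apply Finset.card_le_card_of_injOn (fun v => fun k => v k.1)
          (fun _ _ => Finset.mem_univ _)
        intro v hv w hw hvw
        exact key v w hv hw (fun k hki hkj => congrFun hvw ⟨k, hki, hkj⟩)
    _ = n ^ (d - 2) := by
        rw [Finset.card_univ, Fintype.card_fun, ZMod.card, hcard]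

end Counting

lemma bonferroni {ι β : Type*} [DecidableEq ι] [DecidableEq β]
    (F : Finset ι) (A : ι → Finset β) (c : ℕ)
    (h : ∀ s ∈ F, ∀ t ∈ F, s ≠ t → (A s ∩ A t).card ≤ c) :
    ∑ s ∈ F, (A s).card ≤ (F.biUnion A).card + F.card * F.card * c := by
  induction F using Finset.induction_on with
  | empty => simp
  | @insert a F ha ih =>
    have hIH := ih (fun s hs t ht hst => h s (Finset.mem_insert_of_mem hs)
      t (Finset.mem_insert_of_mem ht) hst)
    rw [Finset.sum_insert ha, Finset.biUnion_insert, Finset.card_insert_of_notMem ha]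
    have h1 : (A a ∪ F.biUnion A).card + (A a ∩ F.biUnion A).card
        = (A a).card + (F.biUnion A).card := Finset.card_union_add_card_inter _ _
    have h2 : (A a ∩ F.biUnion A).card ≤ F.card * c := by
      have hsub : A a ∩ F.biUnion A ⊆ F.biUnion (fun t => A a ∩ A t) := by
        intro x hx
        rw [Finset.mem_inter, Finset.mem_biUnion] at hx
        obtain ⟨hxa, t, ht, hxt⟩ := hx
        exact Finset.mem_biUnion.2 ⟨t, ht, Finset.mem_inter.2 ⟨hxa, hxt⟩⟩
      calc (A a ∩ F.biUnion A).card ≤ (F.biUnion (fun t => A a ∩ A t)).card :=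
            Finset.card_le_card hsub
        _ ≤ ∑ t ∈ F, (A a ∩ A t).card := Finset.card_biUnion_le
        _ ≤ ∑ _t ∈ F, c := Finset.sum_le_sum (fun t ht => h a (Finset.mem_insert_self a F)
            t (Finset.mem_insert_of_mem ht) (fun he => ha (he ▸ ht)))
        _ = F.card * c := by rw [Finset.sum_const, smul_eq_mul]
    nlinarith [hIH, h1, h2]

section Main

variable {n d : ℕ} [NeZero n]

instance : DecidablePred (ZeroSumFree (n := n) (d := d)) := fun v =>
  inferInstanceAs (Decidable (∀ S : Finset (Fin d), S.Nonempty → ∑ i ∈ S, v i ≠ 0))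

def badSet (n d : ℕ) [NeZero n] : Finset (Fin d → ZMod n) :=
  (univ.filter (fun S : Finset (Fin d) => S.Nonempty)).biUnion (sumZero n d)

lemma alpha_add_bad : alphaZSF n d + (badSet n d).card = n ^ d := by
  have h1 : alphaZSF n d = (univ.filter (ZeroSumFree (n := n) (d := d))).card := by
    rw [alphaZSF, Nat.card_eq_fintype_card, Fintype.card_subtype]
  have h2 : univ.filter (ZeroSumFree (n := n) (d := d)) = univ \ badSet n d := by
    ext v
    simp only [Finset.mem_filter, Finset.mem_univ, true_and, Finset.mem_sdiff,
      badSet, Finset.mem_biUnion, sumZero, ZeroSumFree]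
    simp only [not_exists, not_and, Finset.mem_filter, Finset.mem_univ, true_and]
  rw [h1, h2, Finset.card_sdiff_add_card_eq_card (Finset.subset_univ _),
    Finset.card_univ, Fintype.card_fun, ZMod.card, Fintype.card_fin]

lemma card_nonempty_subsets :
    ((univ : Finset (Finset (Fin d))).filter (fun S => S.Nonempty)).card = 2 ^ d - 1 := by
  have h : (univ : Finset (Finset (Fin d))).filter (fun S => S.Nonempty)
      = univ.erase ∅ := by
    ext S
    simp only [Finset.mem_filter, Finset.mem_univ, true_and, Finset.mem_erase, and_true]
    exact Finset.nonempty_iff_ne_empty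
  rw [h, Finset.card_erase_of_mem (Finset.mem_univ _), Finset.card_univ,
    Fintype.card_finset, Fintype.card_fin]

lemma bad_upper (hd : 0 < d) : (badSet n d).card ≤ (2 ^ d - 1) * n ^ (d - 1) := by
  calc (badSet n d).card ≤ ∑ S ∈ univ.filter (fun S : Finset (Fin d) => S.Nonempty),
        (sumZero n d S).card := Finset.card_biUnion_le
    _ = (2 ^ d - 1) * n ^ (d - 1) := by
        rw [Finset.sum_congr rfl (fun S hS => card_sumZero S
          (by simpa using (Finset.mem_filter.1 hS).2) hd)]
        rw [Finset.sum_const, smul_eq_mul, card_nonempty_subsets]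

lemma card_pair_le' (S T : Finset (Fin d)) (hS : S.Nonempty) (hT : T.Nonempty)
    (hST : S ≠ T) : (sumZero n d S ∩ sumZero n d T).card ≤ n ^ (d - 2) := by
  by_cases h : ∃ i ∈ S, i ∉ T
  · obtain ⟨i, hiS, hiT⟩ := h
    obtain ⟨j, hjT⟩ := hT
    exact card_pair_le S T i j hiS hiT hjT
  · push_neg at h
    have : ∃ i ∈ T, i ∉ S := by
      by_contra hc
      push_neg at hc
      exact hST (Finset.Subset.antisymm h hc)
    obtain ⟨i, hiT, hiS⟩ := this
    obtain ⟨j, hjS⟩ := hS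
    rw [Finset.inter_comm]
    exact card_pair_le T S i j hiT hiS hjS

lemma bad_lower (hd : 0 < d) :
    (2 ^ d - 1) * n ^ (d - 1) ≤ (badSet n d).card
      + (2 ^ d - 1) * (2 ^ d - 1) * n ^ (d - 2) := by
  have h := bonferroni (univ.filter (fun S : Finset (Fin d) => S.Nonempty))
    (sumZero n d) (n ^ (d - 2)) (fun S hS T hT hST =>
      card_pair_le' S T (by simpa using (Finset.mem_filter.1 hS).2)
        (by simpa using (Finset.mem_filter.1 hT).2) hST)
  rw [Finset.sum_congr rfl (fun S hS => card_sumZero S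
      (by simpa using (Finset.mem_filter.1 hS).2) hd),
    Finset.sum_const, smul_eq_mul, card_nonempty_subsets] at h
  exact h

end Main

lemma pow_succ_lower (n m : ℕ) : n ^ (m + 1) + (m + 1) * n ^ m ≤ (n + 1) ^ (m + 1) := by
  induction m with
  | zero => simp
  | succ m ih =>
    have : (n + 1) ^ (m + 2) = (n + 1) * (n + 1) ^ (m + 1) := by ring
    rw [this]
    calc n ^ (m + 2) + (m + 2) * n ^ (m + 1)
        ≤ (n + 1) * (n ^ (m + 1) + (m + 1) * n ^ m) := by
          have e1 : n ^ (m + 2) = n * n ^ (m + 1) := by ring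
          have e2 : n ^ (m + 1) = n * n ^ m := by ring
          nlinarith [Nat.zero_le (n ^ m)]
      _ ≤ (n + 1) * (n + 1) ^ (m + 1) := Nat.mul_le_mul_left _ ih

lemma pow_succ_upper (n m : ℕ) (hn : 1 ≤ n) :
    (n + 1) ^ (m + 1) ≤ n ^ (m + 1) + (m + 1) * 2 ^ m * n ^ m := by
  induction m with
  | zero => simp
  | succ m ih =>
    have hm : n ^ m ≤ n ^ (m + 1) := Nat.pow_le_pow_right hn (by omega)
    calc (n + 1) ^ (m + 2) = (n + 1) * (n + 1) ^ (m + 1) := by ring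
      _ ≤ (n + 1) * (n ^ (m + 1) + (m + 1) * 2 ^ m * n ^ m) := Nat.mul_le_mul_left _ ih
      _ = n ^ (m + 2) + n ^ (m + 1) + (m + 1) * 2 ^ m * (n * n ^ m)
            + (m + 1) * 2 ^ m * n ^ m := by ring
      _ ≤ n ^ (m + 2) + n ^ (m + 1) + (m + 1) * 2 ^ m * n ^ (m + 1)
            + (m + 1) * 2 ^ m * n ^ (m + 1) := by
          have : n * n ^ m = n ^ (m + 1) := by ring
          rw [this]
          exact Nat.add_le_add_left (Nat.mul_le_mul_left _ hm) _
      _ ≤ n ^ (m + 1 + 1) + (m + 1 + 1) * 2 ^ (m + 1) * n ^ (m + 1) := by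
          have h2 : (1 : ℕ) ≤ 2 ^ m := Nat.one_le_two_pow
          have e : (2 : ℕ) ^ (m + 1) = 2 * 2 ^ m := by ring
          rw [e, show m + 1 + 1 = m + 2 from rfl]
          nlinarith [Nat.mul_le_mul_right (n ^ (m + 1)) h2, Nat.zero_le (2 ^ m * n ^ (m + 1))]

lemma numeric (e B n : ℕ) (hn : B * ((e + 1) * 2 ^ e) + B * B + 1 ≤ n) :
    n ^ (e + 2) + B * (n + 1) ^ (e + 1) + B * B * n ^ e
      < (n + 1) ^ (e + 2) + B * n ^ (e + 1) := by
  have h1 := pow_succ_lower n (e + 1)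
  have h2 := pow_succ_upper n e (by omega)
  have hpos : 0 < n ^ e := Nat.pow_pos (by omega)
  have key : (B * ((e + 1) * 2 ^ e) + B * B) * n ^ e < (e + 2) * n ^ (e + 1) := by
    calc (B * ((e + 1) * 2 ^ e) + B * B) * n ^ e < n * n ^ e :=
          Nat.mul_lt_mul_of_lt_of_le (by omega) (le_refl _) hpos
      _ = n ^ (e + 1) := by ring
      _ ≤ (e + 2) * n ^ (e + 1) := Nat.le_mul_of_pos_left _ (by omega)
  have h2' := Nat.mul_le_mul_left B h2
  nlinarith [h1, h2', key]

theorem eventual_column_hypothesis (d : ℕ) (hd : 0 < d) :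
    ∃ N : ℕ, ∀ n : ℕ, N ≤ n → alphaZSF n d < alphaZSF (n + 1) d := by
  match d, hd with
  | 1, _ =>
    refine ⟨1, fun n hn => ?_⟩
    have key : ∀ m : ℕ, 1 ≤ m → alphaZSF m 1 + 1 = m := by
      intro m hm
      haveI : NeZero m := ⟨by omega⟩
      have h1 := alpha_add_bad (n := m) (d := 1)
      have hF : (univ.filter (fun S : Finset (Fin 1) => S.Nonempty))
          = {({0} : Finset (Fin 1))} := by decide
      have hbad : (badSet m 1).card = 1 := by
        rw [badSet, hF, Finset.singleton_biUnion,
          card_sumZero _ ⟨0, Finset.mem_singleton_self 0⟩ (by omega)]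
        norm_num
      rw [hbad, pow_one] at h1
      exact h1
    have ha := key n hn
    have hb := key (n + 1) (by omega)
    omega
  | (e + 2), _ =>
    set B := 2 ^ (e + 2) - 1 with hB
    refine ⟨B * ((e + 1) * 2 ^ e) + B * B + 1, fun n hn => ?_⟩
    haveI : NeZero n := ⟨by omega⟩
    haveI : NeZero (n + 1) := ⟨by omega⟩
    have h1 := alpha_add_bad (n := n) (d := e + 2)
    have h2 := alpha_add_bad (n := n + 1) (d := e + 2)
    have hu : (badSet (n + 1) (e + 2)).card ≤ B * (n + 1) ^ (e + 1) :=
      bad_upper (by omega)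
    have hl : B * n ^ (e + 1) ≤ (badSet n (e + 2)).card + B * B * n ^ e :=
      bad_lower (by omega)
    have hnum := numeric e B n (by omega)
    linarith [h1, h2, hu, hl, hnum]
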